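/- For the chain type polynomial with all a_i ≥ 2, the reduced weights q_i = \sum_{j=i}^N (-1)^{j-i}/(a_1⋯a_j) satisfy 0 < q_i ≤ 1/2 for all i. -/

import Mathlib

/-- For the chain type polynomial with all `a_i ≥ 2`, the reduced weights
`q_i = ∑_{j=i}^N (-1)^{j-i}/(a_1⋯a_j)` satisfy `0 < q_i ≤ 1/2` for all `i`. -/
theorem chain_weights_bounds (N : ℕ) (hN : 1 ≤ N) (a : ℕ → ℤ)
    (ha : ∀ i, 1 ≤ i → i ≤ N → 2 ≤ a i) (q : ℕ → ℚ)
    (hq : ∀ i, 1 ≤ i → i ≤ N →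
      q i = ∑ j ∈ Finset.Icc i N, (-1 : ℚ) ^ (j - i) / ∏ k ∈ Finset.Icc 1 j, (a k : ℚ)) :
    ∀ i, 1 ≤ i → i ≤ N → 0 < q i ∧ q i ≤ 1 / 2 := by
  set P : ℕ → ℚ := fun j => ∏ k ∈ Finset.Icc 1 j, (a k : ℚ) with hPdef
  set S : ℕ → ℚ := fun i => ∑ j ∈ Finset.Icc i N, (-1 : ℚ) ^ (j - i) / P j with hSdef
  have hP2 : ∀ j, 1 ≤ j → j ≤ N → 2 ≤ P j := by
    intro j h1 h2
    calc (2:ℚ) = 2 ^ 1 := by norm_num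
      _ ≤ 2 ^ j := by apply pow_le_pow_right₀ (by norm_num) h1
      _ = ∏ _k ∈ Finset.Icc 1 j, (2:ℚ) := by
          rw [Finset.prod_const, Nat.card_Icc]
          congr 1
      _ ≤ P j := by
          apply Finset.prod_le_prod (by intros; norm_num)
          intro k hk
          simp only [Finset.mem_Icc] at hk
          exact_mod_cast ha k hk.1 (hk.2.trans h2)
  have hPpos : ∀ j, j ≤ N → 0 < P j := by
    intro j h2
    rcases Nat.eq_zero_or_pos j with h | h
    · subst h; simp [hPdef]
    · linarith [hP2 j h h2]
  have hrec : ∀ i, 1 ≤ i → i ≤ N → S i = 1 / P i - S (i + 1) := by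
    intro i _ h2
    simp only [hSdef]
    rw [Finset.Icc_eq_cons_Ioc h2, Finset.sum_cons, ← Finset.Icc_add_one_left_eq_Ioc]
    have : ∀ j ∈ Finset.Icc (i+1) N, (-1:ℚ) ^ (j - i) / P j
        = -((-1:ℚ) ^ (j - (i+1)) / P j) := by
      intro j hj
      simp only [Finset.mem_Icc] at hj
      have hji : j - i = (j - (i+1)) + 1 := by omega
      rw [hji, pow_succ]
      ring
    rw [Finset.sum_congr rfl this, Finset.sum_neg_distrib]
    simp [sub_eq_add_neg]
  have key : ∀ k i, N = i + k → 1 ≤ i → 0 < S i ∧ S i ≤ 1 / P i := by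
    intro k
    induction k with
    | zero =>
      intro i hNi h1
      have hiN : i = N := by omega
      have hS : S i = 1 / P i := by
        simp only [hSdef, hiN, Finset.Icc_self, Finset.sum_singleton, Nat.sub_self,
          pow_zero]
      have := hPpos i (by omega)
      constructor
      · rw [hS]; positivity
      · rw [hS]
    | succ k ih =>
      intro i hNi h1
      have hiN : i ≤ N := by omega
      have hi1N : i + 1 ≤ N := by omega
      obtain ⟨hpos, hle⟩ := ih (i+1) (by omega) (by omega)
      have hPi := hPpos i hiN
      have hPi1 : P (i+1) = P i * a (i+1) := by
        simp only [hPdef]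
        rw [Finset.prod_Icc_succ_top (by omega : 1 ≤ i + 1)]
      have ha1 : (2:ℚ) ≤ (a (i+1) : ℚ) := by exact_mod_cast ha (i+1) (by omega) hi1N
      have hPi1gt : P i < P (i+1) := by
        rw [hPi1]; nlinarith
      have hlt : 1 / P (i+1) < 1 / P i := by
        apply one_div_lt_one_div_of_lt hPi hPi1gt
      rw [hrec i h1 hiN]
      constructor
      · have : S (i+1) < 1 / P i := lt_of_le_of_lt hle hlt
        linarith
      · linarith
  intro i h1 h2
  rw [hq i h1 h2]
  have hSi : S i = ∑ j ∈ Finset.Icc i N, (-1 : ℚ) ^ (j - i) / ∏ k ∈ Finset.Icc 1 j, (a k : ℚ) := rfl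
  rw [← hSi]
  obtain ⟨hpos, hle⟩ := key (N - i) i (by omega) h1
  refine ⟨hpos, hle.trans ?_⟩
  have h2P := hP2 i h1 h2
  have := hPpos i h2
  rw [div_le_div_iff₀ this (by norm_num)]
  linarith
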